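/- Let u : T^P × ℝ^Q × ℝ^{Q×P} → ℝ^P be measurable, bounded by Λ, and K-Lipschitz in (y,z) uniformly in x, and let G : T^P × ℝ^Q → ℝ^{P×P} be bounded by M and K-Lipschitz in y uniformly in x. Suppose p : T^P × ℝ^Q → ℝ satisfies 1/C ≤ p ≤ C, ∫_{T^P} p(x,y) dx = 1 for every y, and y ↦ p(·,y) ∈ L²(T^P) is K-Lipschitz. Define ū(y,z) = ∫_{T^P} u(x, y, z(I + G(x,y))) p(x,y) dx. Then for every R > 0, the function ū is Lipschitz on B̄(0,R) × B̄(0,R) ⊆ ℝ^Q × ℝ^{Q×P}, with a Lipschitz constant depending only on Λ, K, M, C and R. -/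

import Mathlib

open MeasureTheory Matrix

noncomputable def frobeniusNorm19 {m n : ℕ} (M : Matrix (Fin m) (Fin n) ℝ) : ℝ :=
  Real.sqrt (∑ i, ∑ j, (M i j) ^ 2)

section FroLemmas

attribute [local instance] Matrix.frobeniusSeminormedAddCommGroup

lemma fro19_eq {m n : ℕ} (A : Matrix (Fin m) (Fin n) ℝ) : frobeniusNorm19 A = ‖A‖ := by
  rw [frobeniusNorm19, Matrix.frobenius_norm_def, Real.sqrt_eq_rpow]
  norm_num [Real.norm_eq_abs, sq_abs]

lemma fro19_nonneg {m n : ℕ} (A : Matrix (Fin m) (Fin n) ℝ) : 0 ≤ frobeniusNorm19 A := by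
  rw [fro19_eq]; exact norm_nonneg _

lemma fro19_add_le {m n : ℕ} (A B : Matrix (Fin m) (Fin n) ℝ) :
    frobeniusNorm19 (A + B) ≤ frobeniusNorm19 A + frobeniusNorm19 B := by
  simp only [fro19_eq]; exact norm_add_le _ _

lemma fro19_mul_le {l m n : ℕ} (A : Matrix (Fin l) (Fin m) ℝ) (B : Matrix (Fin m) (Fin n) ℝ) :
    frobeniusNorm19 (A * B) ≤ frobeniusNorm19 A * frobeniusNorm19 B := by
  simp only [fro19_eq]; exact Matrix.frobenius_norm_mul A B

end FroLemmas

set_option maxHeartbeats 1000000 in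
theorem stmt19 (P Q : ℕ) (Λ K M C R : ℝ) (hC : 0 < C) (hR : 0 < R) :
    ∃ Lip : ℝ,
      ∀ (u : (Fin P → AddCircle (1:ℝ)) → EuclideanSpace ℝ (Fin Q) →
          Matrix (Fin Q) (Fin P) ℝ → EuclideanSpace ℝ (Fin P))
        (G : (Fin P → AddCircle (1:ℝ)) → EuclideanSpace ℝ (Fin Q) →
          Matrix (Fin P) (Fin P) ℝ)
        (p : (Fin P → AddCircle (1:ℝ)) → EuclideanSpace ℝ (Fin Q) → ℝ),
        (∀ y z, Measurable fun x => u x y z) →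
        (∀ x y z, ‖u x y z‖ ≤ Λ) →
        (∀ x y y' z z', ‖u x y' z' - u x y z‖ ≤ K * (‖y' - y‖ + frobeniusNorm19 (z' - z))) →
        (∀ y i j, Measurable fun x => G x y i j) →
        (∀ x y, frobeniusNorm19 (G x y) ≤ M) →
        (∀ x y y', frobeniusNorm19 (G x y' - G x y) ≤ K * ‖y' - y‖) →
        (∀ y, Measurable fun x => p x y) →
        (∀ x y, 1 / C ≤ p x y ∧ p x y ≤ C) →
        (∀ y, (∫ x, p x y) = 1) →
        (∀ y y', Real.sqrt (∫ x, (p x y' - p x y) ^ 2) ≤ K * ‖y' - y‖) →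
        ∀ y y' z z', ‖y‖ ≤ R → ‖y'‖ ≤ R →
          frobeniusNorm19 z ≤ R → frobeniusNorm19 z' ≤ R →
          ‖(∫ x, p x y' • u x y' (z' * (1 + G x y'))) - ∫ x, p x y • u x y (z * (1 + G x y))‖
            ≤ Lip * (‖y' - y‖ + frobeniusNorm19 (z' - z)) := by
  refine ⟨|Λ| * |K| + C * (|K| * (1 + |M| + R * |K|)), ?_⟩
  intro u G p hu_meas hu_bdd hu_lip hG_meas hG_bdd hG_lip hp_meas hp_bnd hp_int hp_lip
    y y' z z' hy hy' hz hz'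
  haveI : IsProbabilityMeasure (volume : Measure (AddCircle (1:ℝ))) :=
    ⟨by rw [AddCircle.measure_univ]; norm_num⟩
  haveI hprob : IsProbabilityMeasure (volume : Measure (Fin P → AddCircle (1:ℝ))) :=
    inferInstance
  obtain ⟨x₀⟩ : Nonempty (Fin P → AddCircle (1:ℝ)) := inferInstance
  have hΛ0 : 0 ≤ Λ := le_trans (norm_nonneg _) (hu_bdd x₀ y z)
  have hK' : 0 ≤ K * ‖y' - y‖ := le_trans (Real.sqrt_nonneg _) (hp_lip y y')
  have hd0 : 0 ≤ ‖y' - y‖ + frobeniusNorm19 (z' - z) :=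
    add_nonneg (norm_nonneg _) (fro19_nonneg _)
  have hyd : ‖y' - y‖ ≤ ‖y' - y‖ + frobeniusNorm19 (z' - z) :=
    le_add_of_nonneg_right (fro19_nonneg _)
  -- |p| ≤ C
  have hC' : 0 < 1 / C := by positivity
  have hpabs : ∀ x Y, |p x Y| ≤ C := fun x Y =>
    abs_le.2 ⟨by linarith [(hp_bnd x Y).1], (hp_bnd x Y).2⟩
  have habs2C : ∀ x, |p x y' - p x y| ≤ 2 * C := by
    intro x
    have h1 := abs_le.1 (hpabs x y)
    have h2 := abs_le.1 (hpabs x y')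
    exact abs_le.2 ⟨by linarith [h1.2, h2.1], by linarith [h1.1, h2.2]⟩
  -- measurability of the composed maps
  have key_meas : ∀ (Y : EuclideanSpace ℝ (Fin Q)) (Z : Matrix (Fin Q) (Fin P) ℝ),
      Measurable fun x => u x Y (Z * (1 + G x Y)) := by
    intro Y Z
    have hcont : ∀ x, Continuous fun m : Fin Q → Fin P → ℝ => u x Y (Matrix.of m) := by
      intro x
      refine continuous_iff_continuousAt.2 fun m => ?_
      refine tendsto_iff_norm_sub_tendsto_zero.mpr ?_
      refine squeeze_zero (fun m' => norm_nonneg _)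
        (fun m' => hu_lip x Y Y (Matrix.of m) (Matrix.of m')) ?_
      have hc : Continuous fun m' : Fin Q → Fin P → ℝ =>
          K * (‖Y - Y‖ + frobeniusNorm19 (Matrix.of m' - Matrix.of m)) := by
        refine continuous_const.mul (continuous_const.add ?_)
        unfold frobeniusNorm19
        refine Real.continuous_sqrt.comp ?_
        refine continuous_finset_sum _ fun i _ => continuous_finset_sum _ fun j _ => ?_
        show Continuous fun m' : Fin Q → Fin P → ℝ => (m' i j - m i j) ^ 2
        exact ((continuous_apply_apply i j).sub continuous_const).pow 2
      have := hc.tendsto m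
      simpa [frobeniusNorm19] using this
    have hum : Measurable (Function.uncurry
        fun (m : Fin Q → Fin P → ℝ) (x : Fin P → AddCircle (1:ℝ)) => u x Y (Matrix.of m)) :=
      measurable_uncurry_of_continuous_of_measurable hcont (fun m => hu_meas Y (Matrix.of m))
    have hwm : Measurable fun x : Fin P → AddCircle (1:ℝ) =>
        Matrix.of.symm (Z * (1 + G x Y)) := by
      refine measurable_pi_lambda _ fun i => measurable_pi_lambda _ fun j => ?_
      have hrw : ∀ x : Fin P → AddCircle (1:ℝ), Matrix.of.symm (Z * (1 + G x Y)) i j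
          = ∑ k, Z i k * ((if k = j then (1:ℝ) else 0) + G x Y k j) := by
        intro x
        rw [show (Matrix.of.symm (Z * (1 + G x Y)) i j)
            = (Z * (1 + G x Y) : Matrix (Fin Q) (Fin P) ℝ) i j from rfl,
          Matrix.mul_apply]
        simp [Matrix.add_apply, Matrix.one_apply]
      simp only [hrw]
      exact Finset.measurable_sum _ fun k _ => ((hG_meas Y k j).const_add _).const_mul _
    exact hum.comp (hwm.prodMk measurable_id)
  have hfm := key_meas y z
  have hf'm := key_meas y' z'
  have hpm := hp_meas y
  have hp'm := hp_meas y'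
  -- integrability helper
  have mkInt : ∀ {g : (Fin P → AddCircle (1:ℝ)) → EuclideanSpace ℝ (Fin P)},
      Measurable g → ∀ (B : ℝ), (∀ x, ‖g x‖ ≤ B) → Integrable g := fun hg B hB =>
    ⟨hg.aestronglyMeasurable, HasFiniteIntegral.of_bounded (ae_of_all _ hB)⟩
  have int1 : Integrable fun x => p x y' • u x y' (z' * (1 + G x y')) :=
    mkInt (hp'm.smul hf'm) (C * Λ) fun x => by
      rw [norm_smul, Real.norm_eq_abs]
      exact mul_le_mul (hpabs x y') (hu_bdd _ _ _) (norm_nonneg _) hC.le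
  have int2 : Integrable fun x => p x y • u x y (z * (1 + G x y)) :=
    mkInt (hpm.smul hfm) (C * Λ) fun x => by
      rw [norm_smul, Real.norm_eq_abs]
      exact mul_le_mul (hpabs x y) (hu_bdd _ _ _) (norm_nonneg _) hC.le
  have int3 : Integrable fun x => (p x y' - p x y) • u x y' (z' * (1 + G x y')) :=
    mkInt ((hp'm.sub hpm).smul hf'm) (2 * C * Λ) fun x => by
      rw [norm_smul, Real.norm_eq_abs]
      exact mul_le_mul (habs2C x) (hu_bdd _ _ _) (norm_nonneg _) (by linarith)
  have int4 : Integrable fun x =>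
      p x y • (u x y' (z' * (1 + G x y')) - u x y (z * (1 + G x y))) :=
    mkInt (hpm.smul (hf'm.sub hfm)) (C * (2 * Λ)) fun x => by
      rw [norm_smul, Real.norm_eq_abs]
      refine mul_le_mul (hpabs x y) ?_ (norm_nonneg _) hC.le
      calc ‖u x y' (z' * (1 + G x y')) - u x y (z * (1 + G x y))‖
          ≤ ‖u x y' (z' * (1 + G x y'))‖ + ‖u x y (z * (1 + G x y))‖ := norm_sub_le _ _
        _ ≤ 2 * Λ := by linarith [hu_bdd x y' (z' * (1 + G x y')), hu_bdd x y (z * (1 + G x y))]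
  -- splitting
  have hsplit : (∫ x, p x y' • u x y' (z' * (1 + G x y'))) -
      (∫ x, p x y • u x y (z * (1 + G x y))) =
      (∫ x, (p x y' - p x y) • u x y' (z' * (1 + G x y'))) +
      ∫ x, p x y • (u x y' (z' * (1 + G x y')) - u x y (z * (1 + G x y))) := by
    rw [← integral_sub int1 int2, ← integral_add int3 int4]
    refine integral_congr_ae (ae_of_all _ fun x => ?_)
    simp only [sub_smul, smul_sub]; abel
  -- Cauchy-Schwarz : ∫|p'-p| ≤ sqrt ∫ (p'-p)^2
  have hpq : Real.HolderConjugate 2 2 := Real.HolderConjugate.two_two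
  have hmem : MemLp (fun x => |p x y' - p x y|) (ENNReal.ofReal 2) volume :=
    MemLp.of_bound ((hp'm.sub hpm).abs).aestronglyMeasurable (2 * C)
      (ae_of_all _ fun x => by rw [Real.norm_eq_abs, abs_abs]; exact habs2C x)
  have hmem1 : MemLp (fun _ : Fin P → AddCircle (1:ℝ) => (1:ℝ)) (ENNReal.ofReal 2) volume :=
    memLp_const 1
  have hH := integral_mul_le_Lp_mul_Lq_of_nonneg hpq
    (ae_of_all _ fun x => abs_nonneg (p x y' - p x y))
    (ae_of_all _ fun _ => zero_le_one) hmem hmem1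
  have hCS : (∫ x, |p x y' - p x y|) ≤ Real.sqrt (∫ x, (p x y' - p x y) ^ 2) := by
    rw [Real.sqrt_eq_rpow]
    calc (∫ x, |p x y' - p x y|) = ∫ x, |p x y' - p x y| * 1 := by simp
      _ ≤ (∫ x, |p x y' - p x y| ^ (2:ℝ)) ^ (1 / (2:ℝ)) *
          (∫ _x : Fin P → AddCircle (1:ℝ), (1:ℝ) ^ (2:ℝ)) ^ (1 / (2:ℝ)) := hH
      _ = (∫ x, (p x y' - p x y) ^ 2) ^ (1 / (2:ℝ)) := by
          have h1 : ∀ x, |p x y' - p x y| ^ (2:ℝ) = (p x y' - p x y) ^ 2 := by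
            intro x
            rw [show ((2:ℝ) = ((2:ℕ):ℝ)) by norm_num, Real.rpow_natCast, sq_abs]
          simp only [h1]
          rw [Real.one_rpow]
          norm_num
  -- part A
  have hA : ‖∫ x, (p x y' - p x y) • u x y' (z' * (1 + G x y'))‖ ≤ Λ * (K * ‖y' - y‖) := by
    have intn1 : Integrable fun x => ‖(p x y' - p x y) • u x y' (z' * (1 + G x y'))‖ := int3.norm
    have intn2 : Integrable fun x => |p x y' - p x y| * Λ := by
      refine Integrable.mul_const ?_ Λ
      refine ⟨((hp'm.sub hpm).abs).aestronglyMeasurable,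
        HasFiniteIntegral.of_bounded (C := 2 * C) (ae_of_all _ fun x => ?_)⟩
      rw [Real.norm_eq_abs, abs_abs]; exact habs2C x
    calc ‖∫ x, (p x y' - p x y) • u x y' (z' * (1 + G x y'))‖
        ≤ ∫ x, ‖(p x y' - p x y) • u x y' (z' * (1 + G x y'))‖ :=
          norm_integral_le_integral_norm _
      _ ≤ ∫ x, |p x y' - p x y| * Λ := by
          refine integral_mono intn1 intn2 fun x => ?_
          rw [norm_smul, Real.norm_eq_abs]
          exact mul_le_mul_of_nonneg_left (hu_bdd x y' _) (abs_nonneg _)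
      _ = (∫ x, |p x y' - p x y|) * Λ := integral_mul_const _ _
      _ ≤ Real.sqrt (∫ x, (p x y' - p x y) ^ 2) * Λ := mul_le_mul_of_nonneg_right hCS hΛ0
      _ ≤ (K * ‖y' - y‖) * Λ := mul_le_mul_of_nonneg_right (hp_lip y y') hΛ0
      _ = Λ * (K * ‖y' - y‖) := mul_comm _ _
  -- pointwise estimate for the second term
  have hptwise : ∀ x, ‖u x y' (z' * (1 + G x y')) - u x y (z * (1 + G x y))‖ ≤
      |K| * (1 + |M| + R * |K|) * (‖y' - y‖ + frobeniusNorm19 (z' - z)) := by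
    intro x
    have h1 := hu_lip x y y' (z * (1 + G x y)) (z' * (1 + G x y'))
    have hrw : z' * (1 + G x y') - z * (1 + G x y) =
        ((z' - z) + (z' - z) * G x y') + z * (G x y' - G x y) := by
        rw [Matrix.mul_add, Matrix.mul_add, Matrix.mul_one, Matrix.mul_one, Matrix.sub_mul,
          Matrix.mul_sub]; abel
    have h2 : frobeniusNorm19 (z' * (1 + G x y') - z * (1 + G x y)) ≤
        (frobeniusNorm19 (z' - z) + frobeniusNorm19 (z' - z) * |M|) + R * (|K| * ‖y' - y‖) := by
      rw [hrw]
      have t1 := fro19_add_le ((z' - z) + (z' - z) * G x y') (z * (G x y' - G x y))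
      have t2 := fro19_add_le (z' - z) ((z' - z) * G x y')
      have t3 : frobeniusNorm19 ((z' - z) * G x y') ≤ frobeniusNorm19 (z' - z) * |M| :=
        le_trans (fro19_mul_le _ _)
          (mul_le_mul_of_nonneg_left (le_trans (hG_bdd x y') (le_abs_self M)) (fro19_nonneg _))
      have t4 : frobeniusNorm19 (z * (G x y' - G x y)) ≤ R * (|K| * ‖y' - y‖) :=
        le_trans (fro19_mul_le _ _)
          (mul_le_mul hz (le_trans (hG_lip x y y')
            (mul_le_mul_of_nonneg_right (le_abs_self K) (norm_nonneg _)))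
            (fro19_nonneg _) hR.le)
      linarith
    have h3 : ‖u x y' (z' * (1 + G x y')) - u x y (z * (1 + G x y))‖ ≤
        |K| * (‖y' - y‖ + frobeniusNorm19 (z' * (1 + G x y') - z * (1 + G x y))) :=
      le_trans h1 (mul_le_mul_of_nonneg_right (le_abs_self K)
        (add_nonneg (norm_nonneg _) (fro19_nonneg _)))
    have h4 := mul_le_mul_of_nonneg_left h2 (abs_nonneg K)
    have hb0 : 0 ≤ frobeniusNorm19 (z' - z) := fro19_nonneg _
    have ha0 : 0 ≤ ‖y' - y‖ := norm_nonneg _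
    nlinarith [h3, h4, mul_nonneg (mul_nonneg (abs_nonneg K) (abs_nonneg M)) ha0,
      mul_nonneg (mul_nonneg (mul_nonneg (abs_nonneg K) hR.le) (abs_nonneg K)) hb0]
  have hB : ‖∫ x, p x y • (u x y' (z' * (1 + G x y')) - u x y (z * (1 + G x y)))‖ ≤
      C * (|K| * (1 + |M| + R * |K|) * (‖y' - y‖ + frobeniusNorm19 (z' - z))) := by
    refine le_trans ?_ (le_of_eq (mul_one _))
    refine le_trans (norm_integral_le_of_norm_le_const (μ := volume)
      (C := C * (|K| * (1 + |M| + R * |K|) * (‖y' - y‖ + frobeniusNorm19 (z' - z))))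
      (ae_of_all _ fun x => ?_)) (le_of_eq ?_)
    · rw [norm_smul, Real.norm_eq_abs]
      exact mul_le_mul (hpabs x y) (hptwise x) (norm_nonneg _) hC.le
    · simp [measure_univ]
  -- conclusion
  have e1 : Λ * (K * ‖y' - y‖) ≤ |Λ| * |K| * (‖y' - y‖ + frobeniusNorm19 (z' - z)) := by
    have h1 : K * ‖y' - y‖ ≤ |K| * (‖y' - y‖ + frobeniusNorm19 (z' - z)) := by
      have h2 : K * ‖y' - y‖ ≤ |K| * ‖y' - y‖ :=
        mul_le_mul_of_nonneg_right (le_abs_self K) (norm_nonneg _)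
      have h3 : |K| * ‖y' - y‖ ≤ |K| * (‖y' - y‖ + frobeniusNorm19 (z' - z)) :=
        mul_le_mul_of_nonneg_left hyd (abs_nonneg K)
      linarith
    calc Λ * (K * ‖y' - y‖) ≤ |Λ| * (K * ‖y' - y‖) :=
          mul_le_mul_of_nonneg_right (le_abs_self Λ) hK'
      _ ≤ |Λ| * (|K| * (‖y' - y‖ + frobeniusNorm19 (z' - z))) :=
          mul_le_mul_of_nonneg_left h1 (abs_nonneg Λ)
      _ = |Λ| * |K| * (‖y' - y‖ + frobeniusNorm19 (z' - z)) := by ring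
  refine (congrArg norm hsplit).trans_le ?_
  calc ‖(∫ x, (p x y' - p x y) • u x y' (z' * (1 + G x y'))) +
        ∫ x, p x y • (u x y' (z' * (1 + G x y')) - u x y (z * (1 + G x y)))‖
      ≤ ‖∫ x, (p x y' - p x y) • u x y' (z' * (1 + G x y'))‖ +
        ‖∫ x, p x y • (u x y' (z' * (1 + G x y')) - u x y (z * (1 + G x y)))‖ := norm_add_le _ _
    _ ≤ (|Λ| * |K| + C * (|K| * (1 + |M| + R * |K|))) * (‖y' - y‖ + frobeniusNorm19 (z' - z)) := by
        nlinarith [hA, hB, e1]
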